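/- arXiv:1506.02096 — 2 statements merged into one kernel-verified Lean document; each statement's English description precedes it below -/
import Mathlib

section
/- Define binary rooted trees T_i by: T_1 is a single node, and for i ≥ 2, T_i consists of a root whose left subtree is a copy of T_{i−1} and whose right subtree is a rooted path with |T_{i−1}| + 1 nodes. Then for every i ≥ 1, T_i has exactly 3·2^{i−1} − 2 nodes and hpd(T_i) = i, and for every i ≥ 2, rpw(T_i) = 2. In particular, there are infinitely many binary trees whose rooted pathwidth is 2 but whose heaviest-path depth is Ω(log n) in the number n of nodes. -/
/-- A finite rooted tree: a root together with the list of subtrees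
rooted at its children (the list order is the left-to-right order for
ordered trees; definitions that do not mention the order are
order-independent). -/
inductive RTree : Type where
  | node : List RTree → RTree

namespace RTree

/-- The subtrees rooted at the children of the root. -/
def children : RTree → List RTree
  | node cs => cs

/-- Number of nodes of the tree. -/
def size : RTree → ℕ
  | node cs => 1 + (cs.attach.map fun c => size c.1).sum
decreasing_by have := List.sizeOf_lt_of_mem c.2; simp only [RTree.node.sizeOf_spec]; omega

/-- Maximum of a list of naturals (`0` for the empty list). -/
def listMaxD (l : List ℕ) : ℕ := l.foldr max 0

/-- Minimum of a nonempty list of naturals (`0` for the empty list). -/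
def listMinD : List ℕ → ℕ
  | [] => 0
  | x :: xs => xs.foldr min x

/-- Given the list `rs` of rooted pathwidths of the children of the root,
the rooted pathwidth of the tree:
`1` if there are no children, and otherwise
`min over j of (max over i of rs[i] + χ(i ≠ j))`. -/
def rpwAux (rs : List ℕ) : ℕ :=
  if rs = [] then 1 else
    listMinD ((List.range rs.length).map fun j =>
      listMaxD ((List.range rs.length).map fun i =>
        rs.getD i 0 + if i = j then 0 else 1))

/-- The rooted pathwidth `rpw` of a rooted tree. -/
def rpw : RTree → ℕ
  | node cs => rpwAux (cs.attach.map fun c => rpw c.1)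
decreasing_by have := List.sizeOf_lt_of_mem c.2; simp only [RTree.node.sizeOf_spec]; omega

end RTree

namespace RTree

/-- Given the list `szs` of sizes of the children subtrees and the list `rs`
of their heaviest-path depths, the heaviest-path depth of the tree:
`1` if there are no children, and otherwise the minimum over all
size-heaviest children `j` of `max over i of rs[i] + χ(i ≠ j)`. -/
def hpdAux (szs rs : List ℕ) : ℕ :=
  if rs = [] then 1 else
    listMinD (((List.range rs.length).filter fun j =>
        szs.getD j 0 = listMaxD szs).map fun j =>
      listMaxD ((List.range rs.length).map fun i =>
        rs.getD i 0 + if i = j then 0 else 1))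

/-- The heaviest-path depth `hpd` of a rooted tree. -/
def hpd : RTree → ℕ
  | node cs => hpdAux (cs.map size) (cs.attach.map fun c => hpd c.1)
decreasing_by have := List.sizeOf_lt_of_mem c.2; simp only [RTree.node.sizeOf_spec]; omega

end RTree

namespace RTree

/-- Every node of the tree has at most `k` children. -/
inductive DegLE (k : ℕ) : RTree → Prop
  | mk (cs : List RTree) : cs.length ≤ k → (∀ c ∈ cs, DegLE k c) →
      DegLE k (RTree.node cs)

/-- `pathT n` is a rooted path with `n + 1` nodes. -/
def pathT : ℕ → RTree
  | 0 => node []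
  | n + 1 => node [pathT n]

/-- The family `T_i` (indexed so that `Tseq i = T_i` for `i ≥ 1`):
`T_1` is a single node, and for `i ≥ 2` the root of `T_i` has left subtree
`T_{i-1}` and right subtree a rooted path with `|T_{i-1}| + 1` nodes. -/
def Tseq : ℕ → RTree
  | 0 => node []
  | 1 => node []
  | i + 2 => node [Tseq (i + 1), pathT (size (Tseq (i + 1)))]

lemma size_node (cs : List RTree) : size (node cs) = 1 + (cs.map size).sum := by
  rw [size]; simp [List.attach_map_val]

lemma rpw_node (cs : List RTree) : rpw (node cs) = rpwAux (cs.map rpw) := by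
  rw [rpw]; congr 1; simp [List.attach_map_val]

lemma hpd_node (cs : List RTree) :
    hpd (node cs) = hpdAux (cs.map size) (cs.map hpd) := by
  rw [hpd]; congr 1; simp [List.attach_map_val]

lemma rpwAux_pair (a b : ℕ) :
    rpwAux [a, b] = min (max a (b + 1)) (max (a + 1) b) := by
  simp [rpwAux, listMinD, listMaxD, List.range_succ] <;> omega

lemma rpwAux_single (a : ℕ) : rpwAux [a] = a := by
  simp [rpwAux, listMinD, listMaxD, List.range_succ]

lemma hpdAux_pair (s a b : ℕ) : hpdAux [s, s + 1] [a, b] = max (a + 1) b := by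
  simp [hpdAux, listMinD, listMaxD, List.range_succ, List.filter] <;> omega

lemma hpdAux_single (s a : ℕ) : hpdAux [s] [a] = a := by
  simp [hpdAux, listMinD, listMaxD, List.range_succ, List.filter]

lemma size_pathT (n : ℕ) : size (pathT n) = n + 1 := by
  induction n with
  | zero => simp [pathT, size_node]
  | succ n ih => simp [pathT, size_node, ih]; omega

lemma rpw_pathT (n : ℕ) : rpw (pathT n) = 1 := by
  induction n with
  | zero => rw [pathT, rpw_node]; rfl
  | succ n ih => rw [pathT, rpw_node]; simp [ih, rpwAux_single]

lemma hpd_pathT (n : ℕ) : hpd (pathT n) = 1 := by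
  induction n with
  | zero => rw [pathT, hpd_node]; rfl
  | succ n ih => rw [pathT, hpd_node]; simp [ih, hpdAux_single]

lemma degLE_pathT (n : ℕ) : DegLE 2 (pathT n) := by
  induction n with
  | zero => exact ⟨[], by simp, by simp⟩
  | succ n ih => exact ⟨[pathT n], by simp, by simpa using ih⟩

lemma Tseq_main (i : ℕ) :
    DegLE 2 (Tseq (i + 1)) ∧ size (Tseq (i + 1)) = 3 * 2 ^ i - 2 ∧
      hpd (Tseq (i + 1)) = i + 1 ∧ rpw (Tseq (i + 1)) = min (i + 1) 2 := by
  induction i with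
  | zero =>
    refine ⟨⟨[], by simp, by simp⟩, by simp [Tseq, size_node], ?_, ?_⟩
    · rw [show Tseq 1 = node [] from rfl, hpd_node]; rfl
    · rw [show Tseq 1 = node [] from rfl, rpw_node]; rfl
  | succ i ih =>
    obtain ⟨hdeg, hsz, hhpd, hrpw⟩ := ih
    have h2 : (1:ℕ) ≤ 2 ^ i := Nat.one_le_two_pow
    have hT : Tseq (i + 2) = node [Tseq (i + 1), pathT (size (Tseq (i + 1)))] := rfl
    have hps : size (pathT (size (Tseq (i + 1)))) = size (Tseq (i + 1)) + 1 :=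
      size_pathT _
    refine ⟨?_, ?_, ?_, ?_⟩
    · refine ⟨_, by simp, ?_⟩
      rintro c hc
      simp only [List.mem_cons, List.mem_singleton, List.not_mem_nil, or_false] at hc
      rcases hc with h | h
      · subst h; exact hdeg
      · subst h; exact degLE_pathT _
    · rw [hT, size_node]
      simp only [List.map_cons, List.map_nil, List.sum_cons, List.sum_nil,
        size_pathT, hsz, pow_succ]
      omega
    · rw [hT, hpd_node]
      simp only [List.map_cons, List.map_nil, hps, hpdAux_pair, hhpd,
        hpd_pathT]
      omega
    · rw [hT, rpw_node]
      simp only [List.map_cons, List.map_nil, rpwAux_pair, hrpw, rpw_pathT]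
      omega

/-- For every `i ≥ 1`, the binary tree `T_i` has exactly `3·2^{i-1} - 2`
nodes and heaviest-path depth exactly `i`; for every `i ≥ 2`, its rooted
pathwidth is `2`.  In particular (last clause) this gives infinitely many
binary trees with rooted pathwidth `2` whose heaviest-path depth is
`Ω(log n)` in the number `n` of nodes. -/
theorem rpw_two_but_hpd_log :
    (∀ i, 1 ≤ i →
      DegLE 2 (Tseq i) ∧ size (Tseq i) = 3 * 2 ^ (i - 1) - 2 ∧
        hpd (Tseq i) = i) ∧
    (∀ i, 2 ≤ i → rpw (Tseq i) = 2) ∧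
    (∀ i, 2 ≤ i →
      Real.logb 2 ((size (Tseq i) : ℝ)) ≤ (hpd (Tseq i) : ℝ) + 1) := by
  have main : ∀ i, 1 ≤ i → DegLE 2 (Tseq i) ∧ size (Tseq i) = 3 * 2 ^ (i - 1) - 2 ∧
      hpd (Tseq i) = i := by
    rintro (_ | i) hi
    · omega
    · obtain ⟨h1, h2, h3, _⟩ := Tseq_main i
      exact ⟨h1, by simpa using h2, h3⟩
  refine ⟨main, ?_, ?_⟩
  · rintro (_ | i) hi
    · omega
    · have := (Tseq_main i).2.2.2
      omega
  · intro i hi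
    obtain ⟨_, hsz, hhpd⟩ := main i (by omega)
    have h2 : (1:ℕ) ≤ 2 ^ (i - 1) := Nat.one_le_two_pow
    have hle : size (Tseq i) ≤ 2 ^ (i + 1) := by
      rw [hsz]
      have : 2 ^ (i + 1) = 4 * 2 ^ (i - 1) := by
        rw [show i + 1 = (i - 1) + 2 by omega, pow_add]; ring
      omega
    have hpos : (0:ℝ) < (size (Tseq i) : ℝ) := by
      have : 1 ≤ size (Tseq i) := by rw [hsz]; omega
      exact_mod_cast Nat.lt_of_lt_of_le Nat.zero_lt_one this
    calc Real.logb 2 ((size (Tseq i) : ℝ))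
        ≤ Real.logb 2 ((2 : ℝ) ^ (i + 1)) := by
          apply Real.logb_le_logb_of_le one_lt_two hpos
          exact_mod_cast hle
      _ = (i + 1 : ℕ) := by
          rw [Real.logb_pow]; simp
      _ ≤ (hpd (Tseq i) : ℝ) + 1 := by
          rw [hhpd]; push_cast; linarith

end RTree
end

section
/- Let T be an ordered rooted tree whose root has d ≥ 1 children and let W ≥ 2 be an integer. Then T has a rank-W-witness with vertical-child index v = 1 if and only if T has a left-corner-W-witness; symmetrically, T has a rank-W-witness with vertical-child index v = d if and only if T has a right-corner-W-witness. -/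
namespace RTree

/-- A rank-`W`-witness for a tree whose root has `rs.length ≥ 1` children,
where `rs` is the list of ranks of the children subtrees (left to right,
`0`-indexed).  It consists of a set `big` of big children (the others are
small), a coordinate `X` with `1 ≤ X ≤ W`, and the index `v` of the
vertical child, which must be big, subject to (R1ℓ), (R1r), (R2ℓ), (R2r)
and (R3). -/
def IsRankWitness (rs : List ℕ) (W : ℕ) (big : Finset (Fin rs.length)) (X : ℕ)
    (v : Fin rs.length) : Prop :=
  1 ≤ X ∧ X ≤ W ∧ v ∈ big ∧
  -- (R1ℓ): at most X-1 big children are strictly left of c_v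
  ((big.filter fun i => i < v).card < X) ∧
  -- (R1r): at most W-X big children are strictly right of c_v
  ((big.filter fun i => v < i).card + X ≤ W) ∧
  -- (R2ℓ): every small child left of c_v has rank ≤ X-1-ℓ_i
  (∀ i : Fin rs.length, i ∉ big → i < v →
      rs.get i + (big.filter fun j => j < i).card + 1 ≤ X) ∧
  -- (R2r): every small child right of c_v has rank ≤ W-X-r_i
  (∀ i : Fin rs.length, i ∉ big → v < i →
      rs.get i + (big.filter fun j => i < j).card + X ≤ W) ∧
  -- (R3): injective rank-bounds π : big → {1,…,W} dominating the ranks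
  (∃ π : Fin rs.length → ℕ,
      (∀ i ∈ big, rs.get i ≤ π i ∧ 1 ≤ π i ∧ π i ≤ W) ∧
      Set.InjOn π big)

/-- `T` (with child rank list `rs`) has some rank-`W`-witness. -/
def hasRankWitness (rs : List ℕ) (W : ℕ) : Prop :=
  ∃ (big : Finset (Fin rs.length)) (X : ℕ) (v : Fin rs.length),
    IsRankWitness rs W big X v

/-- Rank of a tree, given the list of ranks of the children of the root:
`1` for a single node, else the smallest `W ≥ 1` admitting a rank-`W`-witness. -/
noncomputable def rankAux (rs : List ℕ) : ℕ :=
  if rs = [] then 1 else sInf {W | 1 ≤ W ∧ hasRankWitness rs W}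

/-- The rank `R(T)` of an ordered rooted tree. -/
noncomputable def rank : RTree → ℕ
  | node cs => rankAux (cs.attach.map fun c => rank c.1)
decreasing_by have := List.sizeOf_lt_of_mem c.2; simp only [RTree.node.sizeOf_spec]; omega

/-- A left-corner-`W`-witness, given the list `rs` of ranks of the children of
the root: a number `W'` with `1 ≤ W' ≤ W+1` and indices
`σ(W') < … < σ(W)` (1-based positions in `{1,…,d}`, so the rank of child
`σ w` is `rs.getD (σ w - 1) 0`) satisfying (C1) and (C2), where by
convention `σ(W'-1) = 0` and `σ(W+1) = d+1`. -/
def IsLeftCornerWitness (rs : List ℕ) (W W' : ℕ) (σ : ℕ → ℕ) : Prop :=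
  1 ≤ W' ∧ W' ≤ W + 1 ∧
  (∀ w, W' ≤ w → w ≤ W → 1 ≤ σ w ∧ σ w ≤ rs.length) ∧
  (∀ w, W' ≤ w → w + 1 ≤ W → σ w < σ (w + 1)) ∧
  -- (C1)
  (∀ w, W' ≤ w → w ≤ W → rs.getD (σ w - 1) 0 = w) ∧
  -- (C2): for `W'-1 ≤ w ≤ W`, children strictly between σ(w) and σ(w+1)
  -- have rank ≤ w-1
  (∀ w, W' ≤ w + 1 → w ≤ W → ∀ i,
      (if W' ≤ w then σ w else 0) < i →
      i < (if w + 1 ≤ W then σ (w + 1) else rs.length + 1) →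
      rs.getD (i - 1) 0 + 1 ≤ w)

/-- A right-corner-`W`-witness: the mirror notion, with
`σ(W) < … < σ(W')` and the conventions `σ(W'-1) = d+1`, `σ(W+1) = 0`. -/
def IsRightCornerWitness (rs : List ℕ) (W W' : ℕ) (σ : ℕ → ℕ) : Prop :=
  1 ≤ W' ∧ W' ≤ W + 1 ∧
  (∀ w, W' ≤ w → w ≤ W → 1 ≤ σ w ∧ σ w ≤ rs.length) ∧
  (∀ w, W' ≤ w → w + 1 ≤ W → σ (w + 1) < σ w) ∧
  -- (C1)
  (∀ w, W' ≤ w → w ≤ W → rs.getD (σ w - 1) 0 = w) ∧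
  -- (C2)
  (∀ w, W' ≤ w + 1 → w ≤ W → ∀ i,
      (if w + 1 ≤ W then σ (w + 1) else 0) < i →
      i < (if W' ≤ w then σ w else rs.length + 1) →
      rs.getD (i - 1) 0 + 1 ≤ w)

end RTree

namespace RTree

theorem hasRankWitness_big (rs : List ℕ) (hne : rs ≠ []) :
    hasRankWitness rs (rs.length + rs.sum + 1) := by
  have hd : 0 < rs.length := List.length_pos_iff.2 hne
  refine ⟨Finset.univ, 1, ⟨0, hd⟩, ?_⟩
  refine ⟨le_refl 1, by omega, Finset.mem_univ _, ?_, ?_, ?_, ?_, ?_⟩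
  · have : (Finset.univ.filter fun i : Fin rs.length => i < ⟨0, hd⟩) = ∅ := by
      ext i; simp [Fin.lt_def]
    simp [this]
  · calc (Finset.univ.filter fun i : Fin rs.length => (⟨0, hd⟩ : Fin rs.length) < i).card + 1
        ≤ (Finset.univ : Finset (Fin rs.length)).card + 1 :=
          by gcongr; exact Finset.filter_subset _ _
      _ ≤ rs.length + rs.sum + 1 := by
          simp [Finset.card_univ]
  · intro i hi; simp at hi
  · intro i hi; simp at hi
  · refine ⟨fun i => (i : ℕ) + 1 + rs.sum, fun i _ => ?_, ?_⟩
    · have h1 : rs.get i ≤ rs.sum := by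
        have : rs.get i ∈ rs := by
          have := List.getElem_mem i.isLt (l := rs)
          simpa using this
        exact List.le_sum_of_mem this
      have h2 : (i : ℕ) < rs.length := i.isLt
      dsimp only
      omega
    · intro a _ b _ h
      dsimp only at h
      have : (a : ℕ) = b := by omega
      exact Fin.ext this

theorem one_le_rank (T : RTree) : 1 ≤ rank T := by
  obtain ⟨cs⟩ := T
  rw [rank]
  unfold rankAux
  split
  · exact le_refl 1
  · rename_i h
    have hne : {W | 1 ≤ W ∧ hasRankWitness (cs.attach.map fun c => rank c.1) W}.Nonempty := by
      refine ⟨_, ?_, hasRankWitness_big _ h⟩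
      have := List.length_pos_iff.2 h
      omega
    exact (Nat.sInf_mem hne).1


open Classical in
theorem rankWitness_of_leftCorner (rs : List ℕ)
    (hrs : ∀ i : Fin rs.length, 1 ≤ rs.get i) (hne : rs ≠ []) (W : ℕ) (hW : 2 ≤ W)
    (W' : ℕ) (σ : ℕ → ℕ) (hc : IsLeftCornerWitness rs W W' σ) :
    ∃ (big : Finset (Fin rs.length)) (X : ℕ) (v : Fin rs.length),
      IsRankWitness rs W big X v ∧ (v : ℕ) = 0 := by
  obtain ⟨h1, h2, h3, h4, h5, h6⟩ := hc
  have hd : 0 < rs.length := List.length_pos_iff.2 hne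
  -- monotonicity of σ
  have hmono : ∀ w1 w2, W' ≤ w1 → w1 ≤ w2 → w2 ≤ W → σ w1 ≤ σ w2 := by
    intro w1 w2 hw1 h12 h2W
    obtain ⟨k, rfl⟩ := Nat.exists_eq_add_of_le h12
    clear h12
    induction k with
    | zero => simp
    | succ k ih =>
      have h' : σ w1 ≤ σ (w1 + k) := ih (by omega)
      have h'' := h4 (w1 + k) (by omega) (by omega)
      show σ w1 ≤ σ (w1 + k + 1)
      omega
  -- C1 in get form
  have hC1 : ∀ w, W' ≤ w → w ≤ W → ∀ (h : σ w - 1 < rs.length), rs.get ⟨σ w - 1, h⟩ = w := by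
    intro w hw hwW h
    have := h5 w hw hwW
    rwa [List.getD_eq_getElem rs 0 h] at this
  -- the corner predicate
  set Corner : Fin rs.length → Prop :=
    fun i => ∃ w, W' ≤ w ∧ w ≤ W ∧ σ w = (i : ℕ) + 1 with hCorner
  have hval : ∀ i : Fin rs.length, Corner i →
      W' ≤ rs.get i ∧ rs.get i ≤ W ∧ σ (rs.get i) = (i : ℕ) + 1 := by
    intro i ⟨w, hw1, hw2, hw3⟩
    have hlt : σ w - 1 < rs.length := by have := i.isLt; omega
    have hgw : rs.get ⟨σ w - 1, hlt⟩ = w := hC1 w hw1 hw2 hlt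
    have hie : (⟨σ w - 1, hlt⟩ : Fin rs.length) = i := by
      apply Fin.ext; simp; omega
    rw [hie] at hgw
    subst hgw
    exact ⟨hw1, hw2, hw3⟩
  have hcinj : ∀ i j : Fin rs.length, Corner i → Corner j → rs.get i = rs.get j → i = j := by
    intro i j hi hj hij
    obtain ⟨_, _, hi3⟩ := hval i hi
    obtain ⟨_, _, hj3⟩ := hval j hj
    rw [hij] at hi3
    apply Fin.ext
    omega
  -- W' = 1 forces σ 1 = 1
  have hW1 : W' = 1 → σ 1 = 1 := by
    intro hW'
    by_contra hσ
    have hb := h3 1 (by omega) (by omega)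
    have h6' := h6 0 (by omega) (by omega) 1 (by rw [if_neg (by omega)]; omega)
      (by rw [if_pos (by omega)]; show 1 < σ 1; omega)
    omega
  -- a small first child has rank ≤ W' - 2
  have hv0small : ¬ Corner ⟨0, hd⟩ → rs.getD 0 0 + 1 ≤ W' - 1 := by
    intro hnc
    rcases Nat.lt_or_ge W W' with hcase | hcase
    · -- W' = W + 1
      have h6' := h6 W (by omega) (le_refl W) 1 (by rw [if_neg (by omega)]; omega)
        (by rw [if_neg (by omega)]; omega)
      rw [show (1:ℕ) - 1 = 0 from rfl] at h6'
      omega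
    · -- W' ≤ W ; σ W' ≥ 2 since the first child is not a corner
      have hσ2 : 2 ≤ σ W' := by
        rcases Nat.lt_or_ge (σ W') 2 with h | h
        · exfalso
          have := (h3 W' (le_refl W') hcase).1
          have hσ1 : σ W' = 1 := by omega
          exact hnc ⟨W', le_refl W', hcase, by simp [hσ1]⟩
        · exact h
      have h6' := h6 (W' - 1) (by omega) (by omega) 1 (by rw [if_neg (by omega)]; omega)
        (by rw [if_pos (by omega), Nat.sub_add_cancel h1]; omega)
      rw [show (1:ℕ) - 1 = 0 from rfl] at h6'
      omega
  -- the big set, X, v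
  refine ⟨Finset.univ.filter (fun i : Fin rs.length => (i : ℕ) = 0 ∨ Corner i), 1, ⟨0, hd⟩,
    ?_, rfl⟩
  have hmem : ∀ i : Fin rs.length,
      i ∈ Finset.univ.filter (fun i : Fin rs.length => (i : ℕ) = 0 ∨ Corner i) ↔
      ((i : ℕ) = 0 ∨ Corner i) := by
    intro i; simp
  -- uniform cardinality bound via rank injection
  have hcard : ∀ (t : Finset (Fin rs.length)) (L : ℕ), (∀ j ∈ t, Corner j ∧ L ≤ rs.get j) →
      t.card ≤ W + 1 - L := by
    intro t L ht
    have hinj : t.card ≤ (Finset.Icc L W).card := by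
      apply Finset.card_le_card_of_injOn (fun j => rs.get j)
      · intro j hj
        obtain ⟨hcj, hLj⟩ := ht j hj
        obtain ⟨_, hjW, _⟩ := hval j hcj
        exact Finset.mem_Icc.2 ⟨hLj, hjW⟩
      · intro a ha b hb hab
        exact hcinj a b (ht a ha).1 (ht b hb).1 hab
    rwa [Nat.card_Icc] at hinj
  -- corners strictly right of the root have rank ≥ 2
  have hbig_right : ∀ j : Fin rs.length,
      j ∈ Finset.univ.filter (fun i : Fin rs.length => (i : ℕ) = 0 ∨ Corner i) →
      0 < (j : ℕ) → Corner j ∧ 2 ≤ rs.get j := by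
    intro j hj hj0
    have hcj : Corner j := by
      rcases (hmem j).1 hj with h | h
      · omega
      · exact h
    refine ⟨hcj, ?_⟩
    obtain ⟨hj1, hj2, hj3⟩ := hval j hcj
    rcases Nat.lt_or_ge (rs.get j) 2 with h | h
    · exfalso
      have hg1 : rs.get j = 1 := by have := hrs j; omega
      have hW'1 : W' = 1 := by omega
      have := hW1 hW'1
      rw [hg1] at hj3
      omega
    · exact h
  refine ⟨le_refl 1, by omega, ?_, ?_, ?_, ?_, ?_, ?_⟩
  · rw [hmem]; left; rfl
  · -- R1l : nothing left of position 0
    have hemp : (Finset.univ.filter (fun i : Fin rs.length => (i : ℕ) = 0 ∨ Corner i)).filter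
        (fun i => i < (⟨0, hd⟩ : Fin rs.length)) = ∅ := by
      apply Finset.filter_false_of_mem
      intro i _
      simp [Fin.lt_def]
    rw [hemp]
    simp
  · -- R1r
    have h' : ((Finset.univ.filter (fun i : Fin rs.length => (i : ℕ) = 0 ∨ Corner i)).filter
        (fun i => (⟨0, hd⟩ : Fin rs.length) < i)).card ≤ W + 1 - 2 := by
      apply hcard _ 2
      intro j hj
      have hj' := Finset.mem_filter.1 hj
      have hj0 : 0 < (j : ℕ) := hj'.2
      have := hbig_right j hj'.1 hj0
      exact ⟨this.1, this.2⟩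
    omega
  · -- R2l vacuous
    intro i _ hi
    have : (i : ℕ) < 0 := hi
    omega
  · -- R2r
    intro i hi hi0
    have hi0' : 0 < (i : ℕ) := hi0
    have hinc : ¬ Corner i := by
      intro hc
      exact hi ((hmem i).2 (Or.inr hc))
    -- the gap level of i
    obtain ⟨w, hwW, hwW', hlo, hmax⟩ :
        ∃ w, w ≤ W ∧ W' ≤ w + 1 ∧ ((if W' ≤ w then σ w else 0) < (i : ℕ) + 1) ∧
          (∀ u, W' ≤ u → u ≤ W → σ u < (i : ℕ) + 1 → u ≤ w) := by
      by_cases hnA : ((Finset.Icc W' W).filter (fun u => σ u < (i : ℕ) + 1)).Nonempty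
      · have hmem' := Finset.max'_mem _ hnA
        have hm2 := Finset.mem_filter.1 hmem'
        have hm3 := Finset.mem_Icc.1 hm2.1
        refine ⟨_, hm3.2, by omega, ?_, ?_⟩
        · rw [if_pos hm3.1]; exact hm2.2
        · intro u hu1 hu2 hu3
          exact Finset.le_max' ((Finset.Icc W' W).filter (fun u => σ u < (i : ℕ) + 1)) u
            (Finset.mem_filter.2 ⟨Finset.mem_Icc.2 ⟨hu1, hu2⟩, hu3⟩)
      · refine ⟨W' - 1, by omega, by omega, by rw [if_neg (by omega)]; omega, ?_⟩
        intro u hu1 hu2 hu3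
        exact absurd ⟨u, by rw [Finset.mem_filter, Finset.mem_Icc]; exact ⟨⟨hu1, hu2⟩, hu3⟩⟩ hnA
    have hhi : (i : ℕ) + 1 < (if w + 1 ≤ W then σ (w + 1) else rs.length + 1) := by
      split
      · rename_i hle
        have hge : ¬ σ (w + 1) < (i : ℕ) + 1 := by
          intro hlt
          have := hmax (w + 1) hwW' hle hlt
          omega
        have hne' : σ (w + 1) ≠ (i : ℕ) + 1 := by
          intro heq
          exact hinc ⟨w + 1, hwW', hle, heq⟩
        omega
      · have := i.isLt
        omega
    have hsmall : rs.get i + 1 ≤ w := by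
      have h6' := h6 w hwW' hwW ((i : ℕ) + 1) hlo hhi
      rwa [Nat.add_sub_cancel, List.getD_eq_getElem rs 0 i.isLt, ← List.get_eq_getElem] at h6'
    have hcard' : (((Finset.univ.filter (fun i : Fin rs.length => (i : ℕ) = 0 ∨ Corner i))).filter
        (fun j => i < j)).card ≤ W + 1 - (w + 1) := by
      apply hcard _ (w + 1)
      intro j hj
      have hj' := Finset.mem_filter.1 hj
      have hij : (i : ℕ) < (j : ℕ) := hj'.2
      have hcj := (hbig_right j hj'.1 (by omega)).1
      refine ⟨hcj, ?_⟩
      obtain ⟨hj1, hj2, hj3⟩ := hval j hcj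
      by_contra hle
      push_neg at hle
      have hW'w : W' ≤ w := by omega
      have hσle : σ (rs.get j) ≤ σ w := hmono _ _ hj1 (by omega) hwW
      rw [if_pos hW'w] at hlo
      omega
    have hww : 2 ≤ w := by have := hrs i; omega
    omega
  · -- R3
    refine ⟨fun i => if Corner i then rs.get i else W' - 1, ?_, ?_⟩
    · intro i hi
      dsimp only
      by_cases hc : Corner i
      · rw [if_pos hc]
        obtain ⟨hc1, hc2, _⟩ := hval i hc
        exact ⟨le_refl _, by have := hrs i; omega, hc2⟩
      · rw [if_neg hc]
        rcases (hmem i).1 hi with h0 | hcc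
        · have hi0 : i = ⟨0, hd⟩ := Fin.ext h0
          have hvs := hv0small (by rwa [hi0] at hc)
          rw [List.getD_eq_getElem rs 0 hd] at hvs
          have hg : rs.get i = rs[(0:ℕ)] := by rw [hi0, List.get_eq_getElem]
          rw [← hg] at hvs
          have := hrs i
          omega
        · exact absurd hcc hc
    · intro a ha b hb hab
      have ha' := (hmem a).1 (Finset.mem_coe.1 ha)
      have hb' := (hmem b).1 (Finset.mem_coe.1 hb)
      dsimp only at hab
      by_cases hca : Corner a <;> by_cases hcb : Corner b
      · rw [if_pos hca, if_pos hcb] at hab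
        exact hcinj a b hca hcb hab
      · exfalso
        rw [if_pos hca, if_neg hcb] at hab
        have h1a := (hval a hca).1
        clear * - h1 h1a hab
        omega
      · exfalso
        rw [if_neg hca, if_pos hcb] at hab
        have h1b := (hval b hcb).1
        clear * - h1 h1b hab
        omega
      · rcases ha' with h0a | hca'
        · rcases hb' with h0b | hcb'
          · exact Fin.ext (h0a.trans h0b.symm)
          · exact absurd hcb' hcb
        · exact absurd hca' hca


/-- Greedy corner construction: `gr rs W 0 = d+1`; `gr rs W (k+1)` is the largest position
`i ∈ [1, gr rs W k)` whose rank is at least `W - k`, or `0` if there is none. -/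
def gr (rs : List ℕ) (W : ℕ) : ℕ → ℕ
  | 0 => rs.length + 1
  | k+1 => (insert 0 ((Finset.Ico 1 (gr rs W k)).filter fun i => W - k ≤ rs.getD (i-1) 0)).max'
      (Finset.insert_nonempty _ _)

theorem gr_zero (rs : List ℕ) (W : ℕ) : gr rs W 0 = rs.length + 1 := rfl

theorem gr_succ_cases (rs : List ℕ) (W k : ℕ) :
    gr rs W (k+1) = 0 ∨ (1 ≤ gr rs W (k+1) ∧ gr rs W (k+1) < gr rs W k ∧
      W - k ≤ rs.getD (gr rs W (k+1) - 1) 0) := by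
  have h := Finset.max'_mem
    (insert 0 ((Finset.Ico 1 (gr rs W k)).filter fun i => W - k ≤ rs.getD (i-1) 0))
    (Finset.insert_nonempty _ _)
  rcases Finset.mem_insert.1 h with h0 | hmem
  · left; exact h0
  · right
    have h1 := Finset.mem_filter.1 hmem
    have h2 := Finset.mem_Ico.1 h1.1
    exact ⟨h2.1, h2.2, h1.2⟩

theorem gr_max (rs : List ℕ) (W k : ℕ) (i : ℕ) (h1 : 1 ≤ i) (h2 : i < gr rs W k)
    (h3 : W - k ≤ rs.getD (i-1) 0) : i ≤ gr rs W (k+1) :=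
  Finset.le_max' (insert 0 ((Finset.Ico 1 (gr rs W k)).filter fun i => W - k ≤ rs.getD (i-1) 0))
    i (Finset.mem_insert_of_mem (Finset.mem_filter.2 ⟨Finset.mem_Ico.2 ⟨h1, h2⟩, h3⟩))

theorem gr_le (rs : List ℕ) (W k : ℕ) : gr rs W (k+1) ≤ gr rs W k := by
  rcases gr_succ_cases rs W k with h | h <;> omega

theorem gr_antitone (rs : List ℕ) (W : ℕ) {a b : ℕ} (h : a ≤ b) : gr rs W b ≤ gr rs W a := by
  obtain ⟨k, rfl⟩ := Nat.exists_eq_add_of_le h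
  clear h
  induction k with
  | zero => simp
  | succ k ih =>
    have := gr_le rs W (a + k)
    have h2 : gr rs W (a + (k+1)) = gr rs W ((a + k) + 1) := rfl
    omega

theorem gr_zero_stable (rs : List ℕ) (W : ℕ) {a b : ℕ} (h : a ≤ b) (h0 : gr rs W a = 0) :
    gr rs W b = 0 := by
  obtain ⟨k, rfl⟩ := Nat.exists_eq_add_of_le h
  clear h
  induction k with
  | zero => simpa using h0
  | succ k ih =>
    have h2 : gr rs W (a + (k+1)) = gr rs W ((a + k) + 1) := rfl
    rcases gr_succ_cases rs W (a + k) with h | h <;> omega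

theorem gr_strict (rs : List ℕ) (W : ℕ) {a b : ℕ} (h : a < b) (hb : gr rs W b ≠ 0) :
    gr rs W b < gr rs W a := by
  have h1 : gr rs W b ≤ gr rs W (a + 1) := gr_antitone rs W (by omega)
  rcases gr_succ_cases rs W a with h2 | h2
  · exact absurd (gr_zero_stable rs W (by omega : a + 1 ≤ b) h2) hb
  · omega

theorem gr_le_len (rs : List ℕ) (W : ℕ) {k : ℕ} (h : 1 ≤ k) : gr rs W k ≤ rs.length := by
  have h1 : gr rs W k ≤ gr rs W 1 := gr_antitone rs W h
  have h3 : gr rs W (0 + 1) = gr rs W 1 := rfl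
  have h4 : gr rs W 0 = rs.length + 1 := rfl
  rcases gr_succ_cases rs W 0 with h2 | h2 <;> omega


theorem leftCorner_of_rankWitness (rs : List ℕ) (hne : rs ≠ []) (W : ℕ) (hW : 2 ≤ W)
    (big : Finset (Fin rs.length)) (X : ℕ) (v : Fin rs.length)
    (h : IsRankWitness rs W big X v) (hv : (v : ℕ) = 0) :
    ∃ (W' : ℕ) (σ : ℕ → ℕ), IsLeftCornerWitness rs W W' σ := by
  obtain ⟨hX1, hXW, hvbig, hR1l, hR1r, hR2l, hR2r, π, hπ, hπinj⟩ := h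
  have hd : 0 < rs.length := List.length_pos_iff.2 hne
  -- largest number of successful greedy steps
  have h0mem : (0 : ℕ) ∈ (Finset.range (W+1)).filter (fun k => gr rs W k ≠ 0) := by
    refine Finset.mem_filter.2 ⟨Finset.mem_range.2 (by omega), ?_⟩
    rw [gr_zero]; omega
  obtain ⟨K, hKdef⟩ : ∃ K, K = ((Finset.range (W+1)).filter
      (fun k => gr rs W k ≠ 0)).max' ⟨0, h0mem⟩ := ⟨_, rfl⟩
  have hKmem : K < W + 1 ∧ gr rs W K ≠ 0 := by
    have := Finset.max'_mem ((Finset.range (W+1)).filter (fun k => gr rs W k ≠ 0)) ⟨0, h0mem⟩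
    rw [Finset.mem_filter, Finset.mem_range] at this
    rw [hKdef]
    exact this
  have hKW : K ≤ W := by omega
  have hKne : gr rs W K ≠ 0 := hKmem.2
  have hKmax : ∀ k, k ≤ W → gr rs W k ≠ 0 → k ≤ K := by
    intro k hk hkne
    rw [hKdef]
    exact Finset.le_max' _ k (Finset.mem_filter.2 ⟨Finset.mem_range.2 (by omega), hkne⟩)
  have hgr_ne : ∀ k, k ≤ K → gr rs W k ≠ 0 := by
    intro k hk h0
    exact hKne (gr_zero_stable rs W hk h0)
  -- the key claim : each successful greedy pick is a big child with exact rank and π-value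
  have key : ∀ m, m < K → ∃ j : Fin rs.length,
      (j : ℕ) + 1 = gr rs W (m+1) ∧ rs.get j = W - m ∧ j ∈ big ∧ π j = W - m := by
    intro m
    induction m using Nat.strong_induction_on with
    | _ m IH =>
    intro hmK
    have hm1K : m + 1 ≤ K := by omega
    have hne1 : gr rs W (m+1) ≠ 0 := hgr_ne _ hm1K
    rcases gr_succ_cases rs W m with h0 | ⟨hg1, hglt, hgval⟩
    · exact absurd h0 hne1
    have hglen : gr rs W (m+1) ≤ rs.length := gr_le_len rs W (by omega)
    have hjlt : gr rs W (m+1) - 1 < rs.length := by omega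
    obtain ⟨j, hjval⟩ : ∃ j : Fin rs.length, (j : ℕ) = gr rs W (m+1) - 1 := ⟨⟨_, hjlt⟩, rfl⟩
    have hgetj : W - m ≤ rs.get j := by
      rw [List.get_eq_getElem, ← List.getD_eq_getElem rs 0 j.isLt, hjval]
      exact hgval
    -- previous corners are strictly to the right
    have hJgt : ∀ m', m' < m → ∀ j' : Fin rs.length, (j' : ℕ) + 1 = gr rs W (m'+1) →
        (j : ℕ) < (j' : ℕ) := by
      intro m' hm' j' hj'
      have : gr rs W (m+1) < gr rs W (m'+1) := gr_strict rs W (by omega) hne1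
      omega
    -- at least m big children strictly to the right of j
    have hcard_ge : m ≤ (big.filter fun x => j < x).card := by
      classical
      have hch : ∀ m', m' < m → ∃ j' : Fin rs.length,
          (j' : ℕ) + 1 = gr rs W (m'+1) ∧ rs.get j' = W - m' ∧ j' ∈ big ∧ π j' = W - m' := by
        intro m' hm'
        exact IH m' hm' (by omega)
      choose J hJ1 hJ2 hJ3 hJ4 using hch
      have hcc : (Finset.range m).card ≤ (big.filter fun x => j < x).card := by
        apply Finset.card_le_card_of_injOn (fun m' => if h : m' < m then J m' h else j)
        · intro m' hm'
          have hm'' : m' < m := by simpa using hm'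
          simp only [dif_pos hm'']
          refine Finset.mem_coe.2 (Finset.mem_filter.2 ⟨hJ3 m' hm'', ?_⟩)
          exact hJgt m' hm'' (J m' hm'') (hJ1 m' hm'')
        · intro a ha b hb hab
          have ha' : a < m := by simpa using ha
          have hb' : b < m := by simpa using hb
          simp only [dif_pos ha', dif_pos hb'] at hab
          by_contra hne'
          have hgab : gr rs W (a+1) = gr rs W (b+1) := by
            have h1 := hJ1 a ha'
            have h2 := hJ1 b hb'
            rw [hab] at h1
            omega
          rcases Nat.lt_or_ge a b with hlt | hge
          · have := gr_strict rs W (show a + 1 < b + 1 by omega)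
              (hgr_ne _ (show b + 1 ≤ K by omega))
            omega
          · have hba : b < a := by omega
            have := gr_strict rs W (show b + 1 < a + 1 by omega)
              (hgr_ne _ (show a + 1 ≤ K by omega))
            omega
      simpa using hcc
    -- j is big
    have hjbig : j ∈ big := by
      by_contra hjn
      have hjv : v < j := by
        have hj0 : (j : ℕ) ≠ 0 := by
          intro h0
          exact hjn (by rwa [show j = v from Fin.ext (by omega)])
        show (v : ℕ) < (j : ℕ)
        omega
      have hc := hR2r j hjn hjv
      omega
    -- π j = W - m  and exact rank
    have hπj := hπ j hjbig
    have hπle : π j ≤ W - m := by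
      by_contra hgt
      push_neg at hgt
      obtain ⟨j', hj'1, hj'2, hj'3, hj'4⟩ := IH (W - π j) (by omega) (by omega)
      have hππ : π j' = π j := by omega
      have hjj : j' = j := hπinj (Finset.mem_coe.2 hj'3) (Finset.mem_coe.2 hjbig) hππ
      have := gr_strict rs W (show W - π j + 1 < m + 1 by omega) hne1
      rw [hjj] at hj'1
      omega
    exact ⟨j, by omega, by omega, hjbig, by omega⟩
  -- when all W steps succeed, the first child is the lowest corner
  have hσ1 : K = W → gr rs W W = 1 := by
    intro hKW'
    have hπv := hπ v hvbig
    have hmv : W - π v < K := by omega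
    obtain ⟨j, hj1, hj2, hj3, hj4⟩ := key (W - π v) hmv
    have hππ : π j = π v := by omega
    have hjv : j = v := hπinj (Finset.mem_coe.2 hj3) (Finset.mem_coe.2 hvbig) hππ
    have h1 : gr rs W (W - π v + 1) = 1 := by
      rw [hjv] at hj1
      omega
    have h2 : gr rs W W ≤ gr rs W (W - π v + 1) := gr_antitone rs W (by omega)
    have h3 := hgr_ne W (by omega)
    omega
  -- assemble the corner witness
  refine ⟨W + 1 - K, fun w => gr rs W (W + 1 - w), ?_, ?_, ?_, ?_, ?_, ?_⟩
  · omega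
  · omega
  · intro w hw1 hw2
    have hk1 : 1 ≤ W + 1 - w := by omega
    have hkK : W + 1 - w ≤ K := by omega
    refine ⟨?_, gr_le_len rs W hk1⟩
    show 1 ≤ gr rs W (W + 1 - w)
    have := hgr_ne _ hkK
    omega
  · intro w hw1 hw2
    show gr rs W (W + 1 - w) < gr rs W (W + 1 - (w + 1))
    have he : W + 1 - (w + 1) = W - w := by omega
    rw [he]
    exact gr_strict rs W (by omega) (hgr_ne _ (by omega))
  · intro w hw1 hw2
    show rs.getD (gr rs W (W + 1 - w) - 1) 0 = w
    have hmK : W - w < K := by omega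
    obtain ⟨j, hj1, hj2, hj3, hj4⟩ := key (W - w) hmK
    have he : W + 1 - w = W - w + 1 := by omega
    rw [he, ← hj1]
    have hjj : (j : ℕ) + 1 - 1 = (j : ℕ) := by omega
    rw [hjj, List.getD_eq_getElem rs 0 j.isLt, ← List.get_eq_getElem]
    omega
  · intro w hw1 hw2 i hlow0 hhigh0
    have hlow : (if W + 1 - K ≤ w then gr rs W (W + 1 - w) else 0) < i := hlow0
    have hhigh : i < (if w + 1 ≤ W then gr rs W (W + 1 - (w + 1)) else rs.length + 1) := hhigh0
    clear hlow0 hhigh0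
    by_cases hcase : W + 1 - K ≤ w
    · -- interior gap : between σ w and σ (w+1)
      rw [if_pos hcase] at hlow
      have hilt : i < gr rs W (W - w) := by
        by_cases hc2 : w + 1 ≤ W
        · rw [if_pos hc2] at hhigh
          have he : W + 1 - (w + 1) = W - w := by omega
          rwa [he] at hhigh
        · rw [if_neg hc2] at hhigh
          have he : W - w = 0 := by omega
          rw [he, gr_zero]
          omega
      by_contra hcon
      push_neg at hcon
      have hge : W - (W - w) ≤ rs.getD (i - 1) 0 := by
        have hww : W - (W - w) = w := by omega
        omega
      have hle := gr_max rs W (W - w) i (by omega) hilt hge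
      have he : W - w + 1 = W + 1 - w := by omega
      rw [he] at hle
      omega
    · -- gap left of the lowest corner
      rw [if_neg hcase] at hlow
      have hwK : w = W - K := by omega
      by_cases hKW' : K = W
      · -- no gap at all : σ 1 = 1
        exfalso
        have hs1 := hσ1 hKW'
        have hc2 : w + 1 ≤ W := by omega
        rw [if_pos hc2] at hhigh
        have he : W + 1 - (w + 1) = W := by omega
        rw [he] at hhigh
        omega
      · -- the (K+1)-st greedy step failed
        have hK1 : gr rs W (K + 1) = 0 := by
          by_contra hne'
          have := hKmax (K + 1) (by omega) hne'
          omega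
        have hilt : i < gr rs W K := by
          by_cases hc2 : w + 1 ≤ W
          · rw [if_pos hc2] at hhigh
            have he : W + 1 - (w + 1) = K := by omega
            rwa [he] at hhigh
          · rw [if_neg hc2] at hhigh
            have hK0 : K = 0 := by omega
            rw [hK0, gr_zero]
            omega
        by_contra hcon
        push_neg at hcon
        have hge : W - K ≤ rs.getD (i - 1) 0 := by omega
        have hle := gr_max rs W K i (by omega) hilt hge
        omega


open Classical in
theorem rankWitness_reverse (rs : List ℕ) (W : ℕ) (big : Finset (Fin rs.length)) (X : ℕ)
    (v : Fin rs.length) (h : IsRankWitness rs W big X v) :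
    ∃ (big' : Finset (Fin rs.reverse.length)) (X' : ℕ) (v' : Fin rs.reverse.length),
      IsRankWitness rs.reverse W big' X' v' ∧ (v' : ℕ) + (v : ℕ) + 1 = rs.length := by
  obtain ⟨hX1, hXW, hvbig, hR1l, hR1r, hR2l, hR2r, π, hπ, hπinj⟩ := h
  have hlen : rs.reverse.length = rs.length := List.length_reverse
  set f : Fin rs.length → Fin rs.reverse.length :=
    fun i => ⟨rs.length - 1 - (i : ℕ), by rw [List.length_reverse]; have := i.isLt; omega⟩
    with hf
  set g : Fin rs.reverse.length → Fin rs.length :=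
    fun i' => ⟨rs.length - 1 - (i' : ℕ), by
      have h1 := i'.isLt
      have h2 : rs.reverse.length = rs.length := List.length_reverse
      omega⟩ with hg
  have hfval : ∀ i, (f i : ℕ) = rs.length - 1 - (i : ℕ) := fun i => rfl
  have hgval : ∀ i', (g i' : ℕ) = rs.length - 1 - (i' : ℕ) := fun i' => rfl
  have hg_lt : ∀ i' : Fin rs.reverse.length, (i' : ℕ) < rs.length := by
    intro i'
    have h1 := i'.isLt
    omega
  have hfg : ∀ i', f (g i') = i' := by
    intro i'
    apply Fin.ext
    rw [hfval, hgval]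
    have h1 := hg_lt i'
    omega
  have hgf : ∀ i, g (f i) = i := by
    intro i
    apply Fin.ext
    rw [hgval, hfval]
    have h1 := i.isLt
    omega
  have hget : ∀ i', rs.reverse.get i' = rs.get (g i') := by
    intro i'
    rw [List.get_eq_getElem, List.get_eq_getElem, List.getElem_reverse]
  -- cardinality transfers
  have hcard_lt : ∀ i : Fin rs.length,
      (big.image f |>.filter fun j' => j' < f i).card = (big.filter fun j => i < j).card := by
    intro i
    apply Finset.card_nbij g
    · intro j' hj'
      have hj'2 := Finset.mem_filter.1 hj'
      obtain ⟨a, ha, hfa⟩ := Finset.mem_image.1 hj'2.1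
      have hga : g j' = a := by rw [← hfa, hgf]
      refine Finset.mem_filter.2 ⟨hga ▸ ha, ?_⟩
      have hlt : (j' : ℕ) < rs.length - 1 - (i : ℕ) := hj'2.2
      show (i : ℕ) < (g j' : ℕ)
      rw [hgval]
      have := i.isLt
      have := hg_lt j'
      omega
    · intro a ha b hb hab
      have : f (g a) = f (g b) := by rw [hab]
      rwa [hfg, hfg] at this
    · intro j hj
      have hj2 := Finset.mem_filter.1 (Finset.mem_coe.1 hj)
      refine Set.mem_image _ _ _ |>.2 ⟨f j, ?_, hgf j⟩
      refine Finset.mem_coe.2 (Finset.mem_filter.2 ⟨Finset.mem_image_of_mem f hj2.1, ?_⟩)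
      show (f j : ℕ) < (f i : ℕ)
      rw [hfval, hfval]
      have h1 : (i : ℕ) < (j : ℕ) := hj2.2
      have := j.isLt
      omega
  have hcard_gt : ∀ i : Fin rs.length,
      (big.image f |>.filter fun j' => f i < j').card = (big.filter fun j => j < i).card := by
    intro i
    apply Finset.card_nbij g
    · intro j' hj'
      have hj'2 := Finset.mem_filter.1 hj'
      obtain ⟨a, ha, hfa⟩ := Finset.mem_image.1 hj'2.1
      have hga : g j' = a := by rw [← hfa, hgf]
      refine Finset.mem_filter.2 ⟨hga ▸ ha, ?_⟩
      have hlt : rs.length - 1 - (i : ℕ) < (j' : ℕ) := hj'2.2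
      show (g j' : ℕ) < (i : ℕ)
      rw [hgval]
      have := i.isLt
      have := hg_lt j'
      omega
    · intro a ha b hb hab
      have : f (g a) = f (g b) := by rw [hab]
      rwa [hfg, hfg] at this
    · intro j hj
      have hj2 := Finset.mem_filter.1 (Finset.mem_coe.1 hj)
      refine Set.mem_image _ _ _ |>.2 ⟨f j, ?_, hgf j⟩
      refine Finset.mem_coe.2 (Finset.mem_filter.2 ⟨Finset.mem_image_of_mem f hj2.1, ?_⟩)
      show (f i : ℕ) < (f j : ℕ)
      rw [hfval, hfval]
      have h1 : (j : ℕ) < (i : ℕ) := hj2.2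
      have := i.isLt
      omega
  have hmem' : ∀ i', i' ∈ big.image f ↔ g i' ∈ big := by
    intro i'
    constructor
    · intro hi'
      obtain ⟨a, ha, hfa⟩ := Finset.mem_image.1 hi'
      rwa [← hfa, hgf]
    · intro hgi'
      have := Finset.mem_image_of_mem f hgi'
      rwa [hfg] at this
  refine ⟨big.image f, W + 1 - X, f v, ⟨by omega, by omega, Finset.mem_image_of_mem f hvbig,
    ?_, ?_, ?_, ?_, ?_⟩, by rw [hfval]; have := v.isLt; omega⟩
  · rw [hcard_lt v]
    omega
  · rw [hcard_gt v]
    omega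
  · -- R2l for the reversed list
    intro i' hni' hlt
    have hni : g i' ∉ big := fun hc => hni' ((hmem' i').2 hc)
    have hvlt : v < g i' := by
      have h1 : (i' : ℕ) < (f v : ℕ) := hlt
      rw [hfval] at h1
      show (v : ℕ) < (g i' : ℕ)
      rw [hgval]
      have := v.isLt
      have := hg_lt i'
      omega
    have hr := hR2r (g i') hni hvlt
    rw [hget i']
    have hc : ((big.image f).filter fun j => j < i').card = (big.filter fun j => g i' < j).card := by
      have := hcard_lt (g i')
      rwa [hfg] at this
    rw [hc]
    omega
  · -- R2r for the reversed list
    intro i' hni' hlt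
    have hni : g i' ∉ big := fun hc => hni' ((hmem' i').2 hc)
    have hvgt : g i' < v := by
      have h1 : (f v : ℕ) < (i' : ℕ) := hlt
      rw [hfval] at h1
      show (g i' : ℕ) < (v : ℕ)
      rw [hgval]
      have := v.isLt
      have := hg_lt i'
      omega
    have hr := hR2l (g i') hni hvgt
    rw [hget i']
    have hc : ((big.image f).filter fun j => i' < j).card = (big.filter fun j => j < g i').card := by
      have := hcard_gt (g i')
      rwa [hfg] at this
    rw [hc]
    omega
  · refine ⟨fun i' => π (g i'), ?_, ?_⟩
    · intro i' hi'
      have hgi' := (hmem' i').1 hi'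
      have := hπ (g i') hgi'
      rw [hget i']
      exact this
    · intro a ha b hb hab
      have hga := (hmem' a).1 (Finset.mem_coe.1 ha)
      have hgb := (hmem' b).1 (Finset.mem_coe.1 hb)
      have := hπinj (Finset.mem_coe.2 hga) (Finset.mem_coe.2 hgb) hab
      have h2 : f (g a) = f (g b) := by rw [this]
      rwa [hfg, hfg] at h2


theorem getD_reverse (rs : List ℕ) (a : ℕ) (ha : a < rs.length) :
    rs.reverse.getD a 0 = rs.getD (rs.length - 1 - a) 0 := by
  have h1 : a < rs.reverse.length := by rw [List.length_reverse]; exact ha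
  rw [List.getD_eq_getElem rs.reverse 0 h1, List.getD_eq_getElem rs 0 (by omega)]
  exact List.getElem_reverse h1

theorem leftCorner_reverse_of_right (rs : List ℕ) (W W' : ℕ) (σ : ℕ → ℕ)
    (h : IsRightCornerWitness rs W W' σ) :
    IsLeftCornerWitness rs.reverse W W' (fun w => rs.length + 1 - σ w) := by
  obtain ⟨h1, h2, h3, h4, h5, h6⟩ := h
  have hlen : rs.reverse.length = rs.length := List.length_reverse
  refine ⟨h1, h2, ?_, ?_, ?_, ?_⟩
  · intro w hw1 hw2
    have hb := h3 w hw1 hw2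
    constructor
    · show 1 ≤ rs.length + 1 - σ w
      omega
    · show rs.length + 1 - σ w ≤ rs.reverse.length
      omega
  · intro w hw1 hw2
    have ha := h3 w hw1 (by omega)
    have hb := h3 (w + 1) (by omega) hw2
    have hc := h4 w hw1 hw2
    show rs.length + 1 - σ w < rs.length + 1 - σ (w + 1)
    omega
  · intro w hw1 hw2
    show rs.reverse.getD (rs.length + 1 - σ w - 1) 0 = w
    have hb := h3 w hw1 hw2
    have he : rs.length + 1 - σ w - 1 = rs.length - σ w := by omega
    rw [he, getD_reverse rs _ (by omega)]
    have he2 : rs.length - 1 - (rs.length - σ w) = σ w - 1 := by omega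
    rw [he2]
    exact h5 w hw1 hw2
  · intro w hw1 hw2 i hlow0 hhigh0
    have hlow : (if W' ≤ w then rs.length + 1 - σ w else 0) < i := hlow0
    have hhigh : i < (if w + 1 ≤ W then rs.length + 1 - σ (w + 1) else rs.reverse.length + 1) :=
      hhigh0
    clear hlow0 hhigh0
    rw [hlen] at hhigh
    have hi1 : 1 ≤ i := by
      by_cases hc : W' ≤ w
      · rw [if_pos hc] at hlow; omega
      · rw [if_neg hc] at hlow; omega
    have hiN : i ≤ rs.length := by
      by_cases hc : w + 1 ≤ W
      · rw [if_pos hc] at hhigh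
        have hb := h3 (w + 1) (by omega) hc
        omega
      · rw [if_neg hc] at hhigh; omega
    have hr := h6 w hw1 hw2 (rs.length + 1 - i) ?_ ?_
    · have he : i - 1 < rs.length := by omega
      rw [getD_reverse rs _ he]
      have he2 : rs.length - 1 - (i - 1) = rs.length + 1 - i - 1 := by omega
      rw [he2]
      exact hr
    · by_cases hc : w + 1 ≤ W
      · rw [if_pos hc]
        rw [if_pos hc] at hhigh
        have hb := h3 (w + 1) (by omega) hc
        omega
      · rw [if_neg hc]
        omega
    · by_cases hc : W' ≤ w
      · rw [if_pos hc]
        rw [if_pos hc] at hlow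
        have hb := h3 w hc (by omega)
        omega
      · rw [if_neg hc]
        omega

theorem rightCorner_of_leftCorner_reverse (rs : List ℕ) (W W' : ℕ) (σ' : ℕ → ℕ)
    (h : IsLeftCornerWitness rs.reverse W W' σ') :
    IsRightCornerWitness rs W W' (fun w => rs.length + 1 - σ' w) := by
  obtain ⟨h1, h2, h3, h4, h5, h6⟩ := h
  have hlen : rs.reverse.length = rs.length := List.length_reverse
  rw [hlen] at h3 h6
  refine ⟨h1, h2, ?_, ?_, ?_, ?_⟩
  · intro w hw1 hw2
    have hb := h3 w hw1 hw2
    constructor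
    · show 1 ≤ rs.length + 1 - σ' w
      omega
    · show rs.length + 1 - σ' w ≤ rs.length
      omega
  · intro w hw1 hw2
    have ha := h3 w hw1 (by omega)
    have hb := h3 (w + 1) (by omega) hw2
    have hc := h4 w hw1 hw2
    show rs.length + 1 - σ' (w + 1) < rs.length + 1 - σ' w
    omega
  · intro w hw1 hw2
    show rs.getD (rs.length + 1 - σ' w - 1) 0 = w
    have hb := h3 w hw1 hw2
    have hc := h5 w hw1 hw2
    rw [getD_reverse rs _ (by omega)] at hc
    have he : rs.length - 1 - (σ' w - 1) = rs.length + 1 - σ' w - 1 := by omega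
    rw [he] at hc
    exact hc
  · intro w hw1 hw2 i hlow0 hhigh0
    have hlow : (if w + 1 ≤ W then rs.length + 1 - σ' (w + 1) else 0) < i := hlow0
    have hhigh : i < (if W' ≤ w then rs.length + 1 - σ' w else rs.length + 1) := hhigh0
    clear hlow0 hhigh0
    have hi1 : 1 ≤ i := by
      by_cases hc : w + 1 ≤ W
      · rw [if_pos hc] at hlow; omega
      · rw [if_neg hc] at hlow; omega
    have hiN : i ≤ rs.length := by
      by_cases hc : W' ≤ w
      · rw [if_pos hc] at hhigh
        have hb := h3 w hc (by omega)
        omega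
      · rw [if_neg hc] at hhigh; omega
    have hr := h6 w hw1 hw2 (rs.length + 1 - i) ?_ ?_
    · rw [getD_reverse rs _ (by omega : rs.length + 1 - i - 1 < rs.length)] at hr
      have he : rs.length - 1 - (rs.length + 1 - i - 1) = i - 1 := by omega
      rw [he] at hr
      exact hr
    · by_cases hc : W' ≤ w
      · rw [if_pos hc]
        rw [if_pos hc] at hhigh
        have hb := h3 w hc (by omega)
        omega
      · rw [if_neg hc]
        omega
    · by_cases hc : w + 1 ≤ W
      · rw [if_pos hc]
        rw [if_pos hc] at hlow
        have hb := h3 (w + 1) (by omega) hc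
        omega
      · rw [if_neg hc]
        omega


theorem wlast_congr {W : ℕ} {rs rs' : List ℕ} (h : rs = rs') :
    (∃ (big : Finset (Fin rs.length)) (X : ℕ) (v : Fin rs.length),
      IsRankWitness rs W big X v ∧ (v : ℕ) + 1 = rs.length) →
    (∃ (big : Finset (Fin rs'.length)) (X : ℕ) (v : Fin rs'.length),
      IsRankWitness rs' W big X v ∧ (v : ℕ) + 1 = rs'.length) := by
  subst h; exact id


/-- For an ordered rooted tree whose root has `d ≥ 1` children and `W ≥ 2`:
`T` has a rank-`W`-witness with vertical child `c_1` (index `0`) iff `T` has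
a left-corner-`W`-witness; symmetrically, `T` has a rank-`W`-witness with
vertical child `c_d` (index `d-1`) iff `T` has a
right-corner-`W`-witness. -/
theorem rankWitness_first_last_iff_cornerWitness (T : RTree) (W : ℕ)
    (hne : T.children ≠ []) (hW : 2 ≤ W) :
    ((∃ (big : Finset (Fin (T.children.map rank).length)) (X : ℕ)
        (v : Fin (T.children.map rank).length),
        IsRankWitness (T.children.map rank) W big X v ∧ (v : ℕ) = 0) ↔
      (∃ (W' : ℕ) (σ : ℕ → ℕ),
        IsLeftCornerWitness (T.children.map rank) W W' σ)) ∧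
    ((∃ (big : Finset (Fin (T.children.map rank).length)) (X : ℕ)
        (v : Fin (T.children.map rank).length),
        IsRankWitness (T.children.map rank) W big X v ∧
          (v : ℕ) + 1 = (T.children.map rank).length) ↔
      (∃ (W' : ℕ) (σ : ℕ → ℕ),
        IsRightCornerWitness (T.children.map rank) W W' σ)) := by
  have hne1 : T.children.map rank ≠ [] := by
    intro h
    apply hne
    simpa using h
  have hne2 : (T.children.map rank).reverse ≠ [] := by
    intro h
    apply hne1
    have h2 := congrArg List.length h
    rw [List.length_reverse] at h2
    simpa using h2
  have hrsget : ∀ i : Fin (T.children.map rank).length, 1 ≤ (T.children.map rank).get i := by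
    intro i
    have h1 := i.isLt
    rw [List.get_eq_getElem, List.getElem_map]
    exact one_le_rank _
  have hrsget2 : ∀ i : Fin (T.children.map rank).reverse.length,
      1 ≤ (T.children.map rank).reverse.get i := by
    intro i
    rw [List.get_eq_getElem, List.getElem_reverse i.isLt, List.getElem_map]
    exact one_le_rank _
  constructor
  · constructor
    · rintro ⟨big, X, v, hw, hv⟩
      exact leftCorner_of_rankWitness _ hne1 W hW big X v hw hv
    · rintro ⟨W', σ, hc⟩
      exact rankWitness_of_leftCorner _ hrsget hne1 W hW W' σ hc
  · constructor
    · rintro ⟨big, X, v, hw, hv⟩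
      obtain ⟨big', X', v', hw', hrel⟩ := rankWitness_reverse _ W big X v hw
      have hv0 : (v' : ℕ) = 0 := by omega
      obtain ⟨W', σ', hc⟩ := leftCorner_of_rankWitness _ hne2 W hW big' X' v' hw' hv0
      exact ⟨W', _, rightCorner_of_leftCorner_reverse _ W W' σ' hc⟩
    · rintro ⟨W', σ, hc⟩
      have hcl := leftCorner_reverse_of_right _ W W' σ hc
      obtain ⟨big, X, v, hw, hv⟩ := rankWitness_of_leftCorner _ hrsget2 hne2 W hW W' _ hcl
      obtain ⟨big', X', v', hw', hrel⟩ := rankWitness_reverse _ W big X v hw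
      refine wlast_congr (List.reverse_reverse _) ⟨big', X', v', hw', ?_⟩
      have hlen2 : ((T.children.map rank).reverse.reverse).length
          = (T.children.map rank).length := by simp
      have hlen3 : ((T.children.map rank).reverse).length
          = (T.children.map rank).length := List.length_reverse
      omega


end RTree
end
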